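/- Let n ≥ 1, let e be a unit vector in ℝⁿ⁺¹, let H₊ = {x ∈ 𝕊ⁿ | ⟪x, e⟫ > 0} be the open hemisphere determined by e, let E = {y ∈ ℝⁿ⁺¹ | ⟪y, e⟫ = 1} be the affine hyperplane tangent to 𝕊ⁿ at e, and let π : H₊ → E be the central (gnomonic) projection π(x) = ⟪x, e⟫⁻¹ • x. Then π is a homeomorphism from H₊ onto E, and for every subset S ⊆ H₊, S is spherically convex if and only if the image π(S) = {π(x) | x ∈ S} is a convex subset of ℝⁿ⁺¹. -/

import Mathlib

open scoped RealInnerProductSpace ENNReal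
open Set

/-- Euclidean space `ℝ^m`. -/
noncomputable abbrev Euc (m : ℕ) : Type := EuclideanSpace ℝ (Fin m)

/-- The unit sphere `𝕊ⁿ ⊆ ℝⁿ⁺¹`, as a subset of `ℝⁿ⁺¹`. -/
def uSphere (n : ℕ) : Set (Euc (n + 1)) := Metric.sphere 0 1

/-- `A` is a geodesic arc from `p` to `q` on the unit sphere: a set of the form
`{cos t • p + sin t • w | t ∈ [0, θ]}` with `θ ∈ [0, π]`, `w` a unit vector orthogonal
to `p`, and `cos θ • p + sin θ • w = q`. -/
def IsGeodesicArc {n : ℕ} (p q : Euc (n + 1)) (A : Set (Euc (n + 1))) : Prop :=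
  ∃ θ : ℝ, θ ∈ Set.Icc 0 Real.pi ∧
    ∃ w : Euc (n + 1), ‖w‖ = 1 ∧ ⟪p, w⟫ = 0 ∧
      Real.cos θ • p + Real.sin θ • w = q ∧
      A = {x | ∃ t ∈ Set.Icc (0 : ℝ) θ, x = Real.cos t • p + Real.sin t • w}

/-- `S ⊆ 𝕊ⁿ` is spherically convex: any two points of `S` are joined by some geodesic
arc contained in `S`. -/
def SphConvex {n : ℕ} (S : Set (Euc (n + 1))) : Prop :=
  ∀ p ∈ S, ∀ q ∈ S, ∃ A : Set (Euc (n + 1)), IsGeodesicArc p q A ∧ A ⊆ S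

/-! ### Auxiliary lemmas -/

/-- Points on a geodesic arc with unit data have norm one. -/
lemma arcNorm {n : ℕ} (p w : Euc (n+1)) (t : ℝ) (hp : ‖p‖ = 1) (hw : ‖w‖ = 1)
    (hpw : ⟪p, w⟫ = 0) : ‖Real.cos t • p + Real.sin t • w‖ = 1 := by
  have h2 : ‖Real.cos t • p + Real.sin t • w‖ ^ 2 = 1 ^ 2 := by
    rw [norm_add_sq_real]
    simp only [real_inner_smul_left, real_inner_smul_right, hpw, mul_zero,
      norm_smul, mul_pow, hp, hw, Real.norm_eq_abs, sq_abs]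
    nlinarith [Real.sin_sq_add_cos_sq t]
  exact (sq_eq_sq₀ (norm_nonneg _) (by norm_num)).mp h2

lemma scalarPos (a b c θ t : ℝ) (hθπ : θ < Real.pi) (ht : t ∈ Icc 0 θ)
    (ha : 0 < a) (hc : 0 < c) (hce : c = Real.cos θ * a + Real.sin θ * b) :
    0 < Real.cos t * a + Real.sin t * b := by
  rcases eq_or_lt_of_le ht.1 with h0 | h0
  · simp [← h0, ha]
  · have hθ0 : 0 < θ := lt_of_lt_of_le h0 ht.2
    have hsθ : 0 < Real.sin θ := Real.sin_pos_of_pos_of_lt_pi hθ0 hθπ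
    have hst : 0 < Real.sin t :=
      Real.sin_pos_of_pos_of_lt_pi h0 (lt_of_le_of_lt ht.2 hθπ)
    have hsθt : 0 ≤ Real.sin (θ - t) :=
      Real.sin_nonneg_of_nonneg_of_le_pi (by linarith [ht.2]) (by linarith)
    have hid : Real.sin θ * (Real.cos t * a + Real.sin t * b)
        = Real.sin (θ - t) * a + Real.sin t * c := by
      rw [hce, Real.sin_sub]; ring
    nlinarith [mul_pos hst hc, mul_nonneg hsθt ha.le]

lemma arcInnerPos {n : ℕ} (e p q w : Euc (n+1)) (θ t : ℝ)
    (hθπ : θ < Real.pi) (ht : t ∈ Icc 0 θ)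
    (ha : 0 < ⟪p, e⟫) (hc : 0 < ⟪q, e⟫)
    (hq : Real.cos θ • p + Real.sin θ • w = q) :
    0 < ⟪Real.cos t • p + Real.sin t • w, e⟫ := by
  have hce : ⟪q, e⟫ = Real.cos θ * ⟪p, e⟫ + Real.sin θ * ⟪w, e⟫ := by
    rw [← hq]; simp only [inner_add_left, real_inner_smul_left]
  have hde : ⟪Real.cos t • p + Real.sin t • w, e⟫
      = Real.cos t * ⟪p, e⟫ + Real.sin t * ⟪w, e⟫ := by
    simp only [inner_add_left, real_inner_smul_left]
  rw [hde]; exact scalarPos _ _ _ θ t hθπ ht ha hc hce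

lemma projArcPt {n : ℕ} (e p q w : Euc (n+1)) (θ t : ℝ)
    (hθ0 : 0 < θ) (hθπ : θ < Real.pi) (ht : t ∈ Icc 0 θ)
    (ha : 0 < ⟪p, e⟫) (hc : 0 < ⟪q, e⟫)
    (hq : Real.cos θ • p + Real.sin θ • w = q) :
    0 ≤ Real.sin t * ⟪q, e⟫ / (Real.sin θ * ⟪Real.cos t • p + Real.sin t • w, e⟫) ∧
    Real.sin t * ⟪q, e⟫ / (Real.sin θ * ⟪Real.cos t • p + Real.sin t • w, e⟫) ≤ 1 ∧
    (⟪Real.cos t • p + Real.sin t • w, e⟫)⁻¹ • (Real.cos t • p + Real.sin t • w)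
      = (1 - Real.sin t * ⟪q, e⟫ / (Real.sin θ * ⟪Real.cos t • p + Real.sin t • w, e⟫))
          • ((⟪p, e⟫)⁻¹ • p)
        + (Real.sin t * ⟪q, e⟫ / (Real.sin θ * ⟪Real.cos t • p + Real.sin t • w, e⟫))
          • ((⟪q, e⟫)⁻¹ • q) := by
  have hsθ : 0 < Real.sin θ := Real.sin_pos_of_pos_of_lt_pi hθ0 hθπ
  have hce : ⟪q, e⟫ = Real.cos θ * ⟪p, e⟫ + Real.sin θ * ⟪w, e⟫ := by
    rw [← hq]; simp only [inner_add_left, real_inner_smul_left]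
  have hde : ⟪Real.cos t • p + Real.sin t • w, e⟫
      = Real.cos t * ⟪p, e⟫ + Real.sin t * ⟪w, e⟫ := by
    simp only [inner_add_left, real_inner_smul_left]
  have hd : 0 < ⟪Real.cos t • p + Real.sin t • w, e⟫ := by
    rw [hde]; exact scalarPos _ _ _ θ t hθπ ht ha hc hce
  have hst : 0 ≤ Real.sin t :=
    Real.sin_nonneg_of_nonneg_of_le_pi ht.1 (le_of_lt (lt_of_le_of_lt ht.2 hθπ))
  have hsθt : 0 ≤ Real.sin (θ - t) :=
    Real.sin_nonneg_of_nonneg_of_le_pi (by linarith [ht.2]) (by linarith [ht.1, hθπ])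
  have hid : Real.sin θ * ⟪Real.cos t • p + Real.sin t • w, e⟫
      = Real.sin (θ - t) * ⟪p, e⟫ + Real.sin t * ⟪q, e⟫ := by
    rw [hde, hce, Real.sin_sub]; ring
  have hden : 0 < Real.sin θ * ⟪Real.cos t • p + Real.sin t • w, e⟫ := mul_pos hsθ hd
  refine ⟨div_nonneg (mul_nonneg hst hc.le) hden.le, ?_, ?_⟩
  · rw [div_le_one hden, hid]
    nlinarith [mul_nonneg hsθt ha.le]
  · have hvec : Real.cos t • p + Real.sin t • w
        = (Real.sin θ)⁻¹ • (Real.sin (θ - t) • p + Real.sin t • q) := by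
      rw [← hq, Real.sin_sub]
      match_scalars <;> field_simp <;> ring
    set d := ⟪Real.cos t • p + Real.sin t • w, e⟫ with hdset
    set A := ⟪p, e⟫ with hA
    set C := ⟪q, e⟫ with hC
    have hA0 : A ≠ 0 := ne_of_gt ha
    have hC0 : C ≠ 0 := ne_of_gt hc
    have hd0 : d ≠ 0 := ne_of_gt hd
    have hs0 : Real.sin θ ≠ 0 := ne_of_gt hsθ
    rw [hvec]
    match_scalars
    · field_simp
      linear_combination -hid
    · field_simp

/-- Image under gnomonic projection of a geodesic arc is a segment. -/
lemma arcImage {n : ℕ} (e p q w : Euc (n+1)) (θ : ℝ)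
    (hθ0 : 0 < θ) (hθπ : θ < Real.pi)
    (ha : 0 < ⟪p, e⟫) (hc : 0 < ⟪q, e⟫)
    (hq : Real.cos θ • p + Real.sin θ • w = q) :
    (fun x => (⟪x, e⟫)⁻¹ • x) ''
        {x | ∃ t ∈ Icc (0:ℝ) θ, x = Real.cos t • p + Real.sin t • w}
      = segment ℝ ((⟪p, e⟫)⁻¹ • p) ((⟪q, e⟫)⁻¹ • q) := by
  have hsθ : 0 < Real.sin θ := Real.sin_pos_of_pos_of_lt_pi hθ0 hθπ
  ext z
  constructor
  · rintro ⟨x, ⟨t, ht, rfl⟩, rfl⟩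
    obtain ⟨h0, h1, heq⟩ := projArcPt e p q w θ t hθ0 hθπ ht ha hc hq
    exact ⟨_, _, by linarith, h0, by ring, heq.symm⟩
  · rintro ⟨α, β, hα, hβ, hαβ, rfl⟩
    have hcont : Continuous fun t : ℝ => ⟪Real.cos t • p + Real.sin t • w, e⟫ :=
      Continuous.inner ((Real.continuous_cos.smul continuous_const).add
        (Real.continuous_sin.smul continuous_const)) continuous_const
    set F : ℝ → ℝ := fun t =>
      Real.sin t * ⟪q, e⟫ / (Real.sin θ * ⟪Real.cos t • p + Real.sin t • w, e⟫) with hF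
    have hFcont : ContinuousOn F (Icc 0 θ) := by
      apply ContinuousOn.div
      · exact (Real.continuous_sin.mul continuous_const).continuousOn
      · exact (continuous_const.mul hcont).continuousOn
      · intro t ht
        exact ne_of_gt (mul_pos hsθ (arcInnerPos e p q w θ t hθπ ht ha hc hq))
    have hF0 : F 0 = 0 := by simp [hF]
    have hFθ : F θ = 1 := by
      rw [hF]
      simp only [hq]
      rw [div_self (ne_of_gt (mul_pos hsθ hc))]
    have hIvt := intermediate_value_Icc (le_of_lt hθ0) hFcont
    rw [hF0, hFθ] at hIvt
    obtain ⟨t, ht, hFt⟩ := hIvt ⟨hβ, by linarith⟩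
    obtain ⟨h0, h1, heq⟩ := projArcPt e p q w θ t hθ0 hθπ ht ha hc hq
    refine ⟨Real.cos t • p + Real.sin t • w, ⟨t, ht, rfl⟩, ?_⟩
    have hFt' : Real.sin t * ⟪q, e⟫
        / (Real.sin θ * ⟪Real.cos t • p + Real.sin t • w, e⟫) = β := hFt
    show (⟪Real.cos t • p + Real.sin t • w, e⟫)⁻¹ • (Real.cos t • p + Real.sin t • w)
      = α • ((⟪p, e⟫)⁻¹ • p) + β • ((⟪q, e⟫)⁻¹ • q)
    rw [heq, hFt', show α = 1 - β by linarith]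

/-- There exists a unit vector orthogonal to any given vector (dimension ≥ 2). -/
lemma existsUnitOrth {n : ℕ} (hn : 1 ≤ n) (p : Euc (n+1)) :
    ∃ w : Euc (n+1), ‖w‖ = 1 ∧ ⟪p, w⟫ = 0 := by
  have hne : (ℝ ∙ p)ᗮ ≠ ⊥ := by
    intro h
    have htop : (ℝ ∙ p) = ⊤ := Submodule.orthogonal_eq_bot_iff.mp h
    have hle : Module.finrank ℝ ↥(ℝ ∙ p) ≤ 1 := by
      rcases eq_or_ne p 0 with h0 | h0
      · rw [h0, Submodule.span_zero_singleton]
        simp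
      · rw [finrank_span_singleton h0]
    rw [htop, finrank_top] at hle
    have : Module.finrank ℝ (Euc (n+1)) = n + 1 := finrank_euclideanSpace_fin
    omega
  obtain ⟨v, hv, hv0⟩ := (Submodule.ne_bot_iff _).mp hne
  have hpv : ⟪p, v⟫ = 0 :=
    (Submodule.mem_orthogonal _ _).mp hv p (Submodule.mem_span_singleton_self p)
  have hvnorm : (0:ℝ) < ‖v‖ := norm_pos_iff.mpr hv0
  refine ⟨‖v‖⁻¹ • v, ?_, ?_⟩
  · rw [norm_smul, Real.norm_eq_abs, abs_of_pos (inv_pos.mpr hvnorm)]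
    field_simp
  · rw [real_inner_smul_right, hpv, mul_zero]

/-- Existence of a geodesic arc structure between any two unit vectors. -/
lemma existsArc {n : ℕ} (hn : 1 ≤ n) (p q : Euc (n+1)) (hp : ‖p‖ = 1) (hq : ‖q‖ = 1) :
    ∃ θ ∈ Icc 0 Real.pi, ∃ w : Euc (n+1), ‖w‖ = 1 ∧ ⟪p, w⟫ = 0 ∧
      Real.cos θ • p + Real.sin θ • w = q := by
  have hx1 : |⟪p, q⟫| ≤ 1 := by
    have := abs_real_inner_le_norm p q
    rwa [hp, hq, mul_one] at this
  rcases lt_or_eq_of_le hx1 with hlt | heq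
  · -- generic case
    set x := ⟪p, q⟫ with hxd
    have hx1' : -1 ≤ x := (abs_le.mp hx1).1
    have hx2' : x ≤ 1 := (abs_le.mp hx1).2
    set θ := Real.arccos x with hθd
    have hcos : Real.cos θ = x := Real.cos_arccos hx1' hx2'
    have hsq : 0 < 1 - x ^ 2 := by
      have := abs_lt.mp hlt
      nlinarith [this.1, this.2]
    have hsin : Real.sin θ = Real.sqrt (1 - x ^ 2) := Real.sin_arccos x
    have hsinpos : 0 < Real.sin θ := by rw [hsin]; exact Real.sqrt_pos.mpr hsq
    refine ⟨θ, ⟨Real.arccos_nonneg x, Real.arccos_le_pi x⟩,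
      (Real.sin θ)⁻¹ • (q - Real.cos θ • p), ?_, ?_, ?_⟩
    · have hn2 : ‖q - Real.cos θ • p‖ ^ 2 = Real.sin θ ^ 2 := by
        rw [norm_sub_sq_real, Real.sin_sq]
        simp only [real_inner_smul_right, norm_smul, Real.norm_eq_abs, mul_pow, sq_abs,
          hq, hp, hcos]
        have hqp : ⟪q, p⟫ = x := by rw [real_inner_comm]; try exact hxd.symm
        rw [hqp]; ring
      have hnn : ‖q - Real.cos θ • p‖ = Real.sin θ :=
        (sq_eq_sq₀ (norm_nonneg _) hsinpos.le).mp hn2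
      rw [norm_smul, Real.norm_eq_abs, abs_of_pos (inv_pos.mpr hsinpos), hnn]
      field_simp
    · rw [real_inner_smul_right, inner_sub_right, real_inner_smul_right,
        real_inner_self_eq_norm_sq, hp, hcos]
      rw [← hxd]; ring
    · rw [smul_smul, mul_inv_cancel₀ (ne_of_gt hsinpos), one_smul]
      abel
  · -- |⟪p,q⟫| = 1
    obtain ⟨w, hw, hpw⟩ := existsUnitOrth hn p
    rcases (abs_eq (by norm_num : (0:ℝ) ≤ 1)).mp heq with h1 | h1
    · -- ⟪p,q⟫ = 1, so q = p
      have hpq : p = q := by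
        have : ‖p - q‖ ^ 2 = 0 := by
          rw [norm_sub_sq_real, hp, hq, h1]; ring
        have := pow_eq_zero_iff (n := 2) (by norm_num) |>.mp this
        exact sub_eq_zero.mp (by rwa [norm_eq_zero] at this)
      exact ⟨0, ⟨le_refl 0, Real.pi_pos.le⟩, w, hw, hpw, by simp [hpq]⟩
    · -- ⟪p,q⟫ = -1, so q = -p
      have hpq : q = -p := by
        have : ‖p + q‖ ^ 2 = 0 := by
          rw [norm_add_sq_real, hp, hq, h1]; ring
        have := pow_eq_zero_iff (n := 2) (by norm_num) |>.mp this
        have := norm_eq_zero.mp this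
        linear_combination (norm := module) this
      exact ⟨Real.pi, ⟨Real.pi_pos.le, le_refl _⟩, w, hw, hpw, by simp [hpq]⟩

/-- Central (gnomonic) projection from the open hemisphere
`H₊ = {x ∈ 𝕊ⁿ | ⟪x, e⟫ > 0}` onto the tangent hyperplane `E = {y | ⟪y, e⟫ = 1}` is a
homeomorphism, and it maps spherically convex subsets of `H₊` exactly onto convex sets. -/
theorem gnomonic_projection_homeomorph_and_convexity
    {n : ℕ} (hn : 1 ≤ n) (e : Euc (n + 1)) (he : ‖e‖ = 1)
    (Hpos Epl : Set (Euc (n + 1))) (proj : Euc (n + 1) → Euc (n + 1))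
    (hHpos : Hpos = {x | x ∈ uSphere n ∧ 0 < ⟪x, e⟫})
    (hEpl : Epl = {y | ⟪y, e⟫ = 1})
    (hproj : ∀ x, proj x = (⟪x, e⟫)⁻¹ • x) :
    (∃ h : Hpos ≃ₜ Epl, ∀ x : Hpos, (h x : Euc (n + 1)) = proj x) ∧
    ∀ S : Set (Euc (n + 1)), S ⊆ Hpos →
      (SphConvex S ↔ Convex ℝ (proj '' S)) := by
  have hproj' : proj = fun x => (⟪x, e⟫)⁻¹ • x := funext hproj
  subst hproj' hHpos hEpl
  -- basic facts
  have hsph : ∀ x : Euc (n+1), x ∈ uSphere n ↔ ‖x‖ = 1 := fun x =>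
    mem_sphere_zero_iff_norm
  have hmem1 : ∀ x : Euc (n+1), ‖x‖ = 1 → 0 < ⟪x, e⟫ →
      ⟪(⟪x, e⟫)⁻¹ • x, e⟫ = 1 := by
    intro x hx hxe
    rw [real_inner_smul_left, inv_mul_cancel₀ (ne_of_gt hxe)]
  have hEpos : ∀ y : Euc (n+1), ⟪y, e⟫ = 1 → (0:ℝ) < ‖y‖ := by
    intro y hy
    rcases eq_or_ne y 0 with h | h
    · rw [h] at hy; simp at hy
    · exact norm_pos_iff.mpr h
  have hmem2 : ∀ y : Euc (n+1), ⟪y, e⟫ = 1 →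
      (‖y‖⁻¹ • y ∈ uSphere n ∧ 0 < ⟪‖y‖⁻¹ • y, e⟫) := by
    intro y hy
    have h0 := hEpos y hy
    constructor
    · rw [hsph, norm_smul, Real.norm_eq_abs, abs_of_pos (inv_pos.mpr h0)]
      field_simp
    · rw [real_inner_smul_left, hy, mul_one]
      exact inv_pos.mpr h0
  have hleftinv : ∀ x : Euc (n+1), ‖x‖ = 1 → 0 < ⟪x, e⟫ →
      ‖(⟪x, e⟫)⁻¹ • x‖⁻¹ • ((⟪x, e⟫)⁻¹ • x) = x := by
    intro x hx hxe
    rw [norm_smul, Real.norm_eq_abs, abs_of_pos (inv_pos.mpr hxe), hx, mul_one,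
      inv_inv, smul_smul, mul_inv_cancel₀ (ne_of_gt hxe), one_smul]
  have hinj : ∀ x y : Euc (n+1), ‖x‖ = 1 → 0 < ⟪x, e⟫ → ‖y‖ = 1 → 0 < ⟪y, e⟫ →
      (⟪x, e⟫)⁻¹ • x = (⟪y, e⟫)⁻¹ • y → x = y := by
    intro x y hx hxe hy hye hxy
    rw [← hleftinv x hx hxe, hxy, hleftinv y hy hye]
  constructor
  · -- the homeomorphism
    have hcont1 : Continuous fun x : ({x | x ∈ uSphere n ∧ 0 < ⟪x, e⟫} : Set (Euc (n+1))) =>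
        (⟪(x : Euc (n+1)), e⟫)⁻¹ • (x : Euc (n+1)) := by
      rw [continuous_iff_continuousAt]
      intro x
      have h1 : ContinuousAt (fun x : ({x | x ∈ uSphere n ∧ 0 < ⟪x, e⟫} : Set (Euc (n+1))) =>
          ⟪(x : Euc (n+1)), e⟫) x :=
        (continuous_subtype_val.inner continuous_const).continuousAt
      exact (h1.inv₀ (ne_of_gt x.2.2)).smul continuous_subtype_val.continuousAt
    have hcont2 : Continuous fun y : ({y | ⟪y, e⟫ = 1} : Set (Euc (n+1))) =>
        ‖(y : Euc (n+1))‖⁻¹ • (y : Euc (n+1)) := by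
      rw [continuous_iff_continuousAt]
      intro y
      have h1 : ContinuousAt (fun y : ({y | ⟪y, e⟫ = 1} : Set (Euc (n+1))) =>
          ‖(y : Euc (n+1))‖) y := (continuous_subtype_val.norm).continuousAt
      exact (h1.inv₀ (ne_of_gt (hEpos _ y.2))).smul continuous_subtype_val.continuousAt
    refine ⟨⟨⟨fun x => ⟨(⟪(x : Euc (n+1)), e⟫)⁻¹ • (x : Euc (n+1)),
        hmem1 _ ((hsph _).mp x.2.1) x.2.2⟩,
      fun y => ⟨‖(y : Euc (n+1))‖⁻¹ • (y : Euc (n+1)),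
        hmem2 _ y.2⟩,
      fun x => Subtype.ext (hleftinv _ ((hsph _).mp x.2.1) x.2.2),
      fun y => Subtype.ext ?_⟩,
      hcont1.subtype_mk _, hcont2.subtype_mk _⟩, fun x => rfl⟩
    -- right inverse
    obtain ⟨y, hy⟩ := y
    have h0 := hEpos y hy
    show (⟪‖y‖⁻¹ • y, e⟫)⁻¹ • (‖y‖⁻¹ • y) = y
    rw [real_inner_smul_left, hy, mul_one, inv_inv, smul_smul,
      mul_inv_cancel₀ (ne_of_gt h0), one_smul]
  · -- convexity correspondence
    intro S hS
    have hSfacts : ∀ p ∈ S, ‖p‖ = 1 ∧ 0 < ⟪p, e⟫ := by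
      intro p hp
      have := hS hp
      exact ⟨(hsph _).mp this.1, this.2⟩
    constructor
    · -- SphConvex → Convex
      intro hsc
      rintro _ ⟨p, hp, rfl⟩ _ ⟨q, hq, rfl⟩ α β hα hβ hαβ
      obtain ⟨hpn, hpe⟩ := hSfacts p hp
      obtain ⟨hqn, hqe⟩ := hSfacts q hq
      obtain ⟨A, ⟨θ, hθ, w, hw, hpw, hqeq, hA⟩, hAS⟩ := hsc p hp q hq
      rcases eq_or_lt_of_le hθ.1 with hθ0 | hθ0
      · -- θ = 0 : q = p
        have hqp : p = q := by rw [← hqeq, ← hθ0]; simp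
        subst hqp
        have : α • ((⟪p, e⟫)⁻¹ • p) + β • ((⟪p, e⟫)⁻¹ • p) = (⟪p, e⟫)⁻¹ • p := by
          rw [← add_smul, hαβ, one_smul]
        rw [this]
        exact mem_image_of_mem _ hp
      rcases eq_or_lt_of_le hθ.2 with hθπ | hθπ
      · -- θ = π : q = -p, contradiction
        exfalso
        have hqp : q = -p := by rw [← hqeq, hθπ]; simp
        rw [hqp, inner_neg_left] at hqe
        linarith
      · have hseg := arcImage e p q w θ hθ0 hθπ hpe hqe hqeq
        have hz : α • ((⟪p, e⟫)⁻¹ • p) + β • ((⟪q, e⟫)⁻¹ • q)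
            ∈ segment ℝ ((⟪p, e⟫)⁻¹ • p) ((⟪q, e⟫)⁻¹ • q) :=
          ⟨α, β, hα, hβ, hαβ, rfl⟩
        rw [← hseg, ← hA] at hz
        obtain ⟨x, hxA, hxz⟩ := hz
        exact ⟨x, hAS hxA, hxz⟩
    · -- Convex → SphConvex
      intro hconv p hp q hq
      obtain ⟨hpn, hpe⟩ := hSfacts p hp
      obtain ⟨hqn, hqe⟩ := hSfacts q hq
      obtain ⟨θ, hθ, w, hw, hpw, hqeq⟩ := existsArc hn p q hpn hqn
      refine ⟨{x | ∃ t ∈ Icc (0:ℝ) θ, x = Real.cos t • p + Real.sin t • w},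
        ⟨θ, hθ, w, hw, hpw, hqeq, rfl⟩, ?_⟩
      rintro x ⟨t, ht, rfl⟩
      rcases eq_or_lt_of_le hθ.1 with hθ0 | hθ0
      · -- θ = 0 : arc is {p}
        have ht0 : t = 0 := le_antisymm (by rw [hθ0]; exact ht.2) ht.1
        rw [ht0]; simpa using hp
      rcases eq_or_lt_of_le hθ.2 with hθπ | hθπ
      · -- θ = π : q = -p, contradiction
        exfalso
        have hqp : q = -p := by rw [← hqeq, hθπ]; simp
        rw [hqp, inner_neg_left] at hqe
        linarith
      · have hseg := arcImage e p q w θ hθ0 hθπ hpe hqe hqeq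
        have hx : Real.cos t • p + Real.sin t • w
            ∈ {x | ∃ t ∈ Icc (0:ℝ) θ, x = Real.cos t • p + Real.sin t • w} :=
          ⟨t, ht, rfl⟩
        have hmem := mem_image_of_mem (fun x => (⟪x, e⟫)⁻¹ • x) hx
        rw [hseg] at hmem
        have hsub : segment ℝ ((⟪p, e⟫)⁻¹ • p) ((⟪q, e⟫)⁻¹ • q)
            ⊆ (fun x => (⟪x, e⟫)⁻¹ • x) '' S :=
          hconv.segment_subset (mem_image_of_mem _ hp) (mem_image_of_mem _ hq)
        obtain ⟨s, hsS, hseq⟩ := hsub hmem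
        obtain ⟨hsn, hse⟩ := hSfacts s hsS
        have hxn : ‖Real.cos t • p + Real.sin t • w‖ = 1 := arcNorm p w t hpn hw hpw
        have hxe : 0 < ⟪Real.cos t • p + Real.sin t • w, e⟫ :=
          arcInnerPos e p q w θ t hθπ ht hpe hqe hqeq
        have := hinj s (Real.cos t • p + Real.sin t • w) hsn hse hxn hxe hseq
        rw [← this]
        exact hsS
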